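/- Let M be a unital abelian subring of a unital ring B. If M equals its relative double commutant in B (i.e., M = (M,B)''), then M is an intersection of maximal abelian subrings of B. -/
import Mathlib


/-- A subring is maximal abelian if it is commutative and maximal among
commutative subrings. -/
def IsMaximalAbelianSubring {B : Type*} [Ring B] (W : Subring B) : Prop :=
  (∀ x ∈ W, ∀ y ∈ W, x * y = y * x) ∧
    ∀ W' : Subring B, (∀ x ∈ W', ∀ y ∈ W', x * y = y * x) → W ≤ W' → W = W'

/-- The closure of a set of pairwise commuting elements is commutative. -/
lemma closure_comm_of_comm {B : Type*} [Ring B] {s : Set B}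
    (h : ∀ a ∈ s, ∀ b ∈ s, a * b = b * a) :
    ∀ x ∈ Subring.closure s, ∀ y ∈ Subring.closure s, x * y = y * x := by
  intro x hx y hy
  induction hx, hy using Subring.closure_induction₂ with
  | mem_mem a b ha hb => exact h a ha b hb
  | zero_left => simp
  | zero_right => simp
  | one_left => simp
  | one_right => simp
  | neg_left _ _ _ _ ih => simp [neg_mul, mul_neg, ih]
  | neg_right _ _ _ _ ih => simp [neg_mul, mul_neg, ih]
  | add_left _ _ _ _ _ _ ih₁ ih₂ => simp [add_mul, mul_add, ih₁, ih₂]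
  | add_right _ _ _ _ _ _ ih₁ ih₂ => simp [add_mul, mul_add, ih₁, ih₂]
  | mul_left x y z _ _ _ ih₁ ih₂ => rw [mul_assoc, ih₂, ← mul_assoc, ih₁, mul_assoc]
  | mul_right x y z _ _ _ ih₁ ih₂ => rw [← mul_assoc, ih₁, mul_assoc, ih₂, ← mul_assoc]

/-- Any abelian subring is contained in a maximal abelian subring (Zorn). -/
lemma exists_maximal_abelian_ge {B : Type*} [Ring B] (A : Subring B)
    (hA : ∀ x ∈ A, ∀ y ∈ A, x * y = y * x) :
    ∃ W : Subring B, A ≤ W ∧ IsMaximalAbelianSubring W := by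
  obtain ⟨W, hAW, hWmax⟩ := zorn_le_nonempty₀
      {W : Subring B | ∀ x ∈ W, ∀ y ∈ W, x * y = y * x}
      (fun c hcs hc y hyc => by
        refine ⟨sSup c, ?_, fun z hz => le_sSup hz⟩
        intro a ha b hb
        rw [Subring.mem_sSup_of_directedOn ⟨y, hyc⟩ hc.directedOn] at ha hb
        obtain ⟨s, hs, has⟩ := ha
        obtain ⟨t, ht, hbt⟩ := hb
        rcases hc.total hs ht with hst | hts
        · exact hcs ht a (hst has) b hbt
        · exact hcs hs a has b (hts hbt)) A hA
  exact ⟨W, hAW, hWmax.1, fun W' hW' hle => le_antisymm hle (hWmax.2 hW' hle)⟩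

/-- If a unital abelian subring `M` of a unital ring `B` equals its relative double
commutant in `B`, then `M` is an intersection of maximal abelian subrings of `B`. -/
theorem abelian_subring_eq_double_commutant_imp_inter_of_maximal_abelian
    {B : Type*} [Ring B] (M : Subring B)
    (habel : ∀ x ∈ M, ∀ y ∈ M, x * y = y * x)
    (hdc : (M : Set B) =
      (Subring.centralizer ((Subring.centralizer (M : Set B) : Subring B) : Set B) : Set B)) :
    ∃ 𝒞 : Set (Subring B), (∀ W ∈ 𝒞, IsMaximalAbelianSubring W) ∧
      (M : Set B) = ⋂ W ∈ 𝒞, (W : Set B) := by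
  refine ⟨{W | IsMaximalAbelianSubring W ∧ M ≤ W}, fun W hW => hW.1, ?_⟩
  apply Set.eq_of_subset_of_subset
  · intro x hx
    simp only [Set.mem_iInter]
    intro W hW
    exact hW.2 hx
  · intro x hx
    simp only [Set.mem_iInter, Set.mem_setOf_eq, SetLike.mem_coe] at hx
    rw [hdc]
    rw [SetLike.mem_coe, Subring.mem_centralizer_iff]
    intro t ht
    -- t centralizes M; build an abelian subring containing M and t
    rw [SetLike.mem_coe, Subring.mem_centralizer_iff] at ht
    have hcomm : ∀ a ∈ (M : Set B) ∪ {t}, ∀ b ∈ (M : Set B) ∪ {t}, a * b = b * a := by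
      rintro a (ha | rfl) b (hb | rfl)
      · exact habel a ha b hb
      · exact ht a ha
      · exact (ht b hb).symm
      · rfl
    have habc := closure_comm_of_comm hcomm
    obtain ⟨W, hle, hWmax⟩ := exists_maximal_abelian_ge _ habc
    have hMW : M ≤ W := fun a ha => hle (Subring.subset_closure (Or.inl ha))
    have hxW : x ∈ W := hx W ⟨hWmax, hMW⟩
    have htW : t ∈ W := hle (Subring.subset_closure (Set.mem_union_right _ rfl))
    exact hWmax.1 t htW x hxW
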